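/- For a partition λ of n, a partition with a single k-hook-removal structure: for any fixed k ≥ 1, the number of rim hooks of length k that can be removed from λ is at most 2·sq(λ). -/

import Mathlib

/-- `l` represents a partition of `n` (0-indexed parts). -/
def IsPartitionFun (n : ℕ) (l : ℕ → ℕ) : Prop :=
  Antitone l ∧ (∀ i, n ≤ i → l i = 0) ∧ ∑ i ∈ Finset.range n, l i = n

/-- side of largest square in the Ferrers diagram: largest `j` with `λ_j ≥ j`. -/
def sqSide (n : ℕ) (l : ℕ → ℕ) : ℕ :=
  Nat.findGreatest (fun j => 0 < j ∧ j ≤ l (j - 1)) n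

/-- `ν` is obtained from the partition `μ` of `m` by removing a rim hook (border strip)
of size `k`: `ν ⊆ μ` is a partition of `m - k`, exactly `k` cells are removed, the rows
touched by the removed cells form an interval, and the removed skew shape contains no
`2 × 2` square while being connected (for consecutive touched rows `i`, `i+1` we have
`ν_i = μ_{i+1} - 1`). -/
def IsRimHookRemoval (m : ℕ) (μ ν : ℕ → ℕ) (k : ℕ) : Prop :=
  IsPartitionFun m μ ∧ IsPartitionFun (m - k) ν ∧ (∀ i, ν i ≤ μ i) ∧
  (∑ i ∈ Finset.range m, (μ i - ν i) = k) ∧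
  (∀ i j l, i ≤ l → l ≤ j → ν i < μ i → ν j < μ j → ν l < μ l) ∧
  (∀ i, ν i < μ i → ν (i + 1) < μ (i + 1) → ν i + 1 = μ (i + 1))

namespace Stmt4Aux

/-- topmost touched row -/
noncomputable def topRow (l ν : ℕ → ℕ) : ℕ := sInf {i | ν i < l i}

/-- bottommost touched row -/
noncomputable def botRow (l ν : ℕ → ℕ) : ℕ := sSup {i | ν i < l i}

structure HookFacts (n k : ℕ) (l ν : ℕ → ℕ) : Prop where
  mono_l : Antitone l
  mono_nu : Antitone ν
  a_le_b : topRow l ν ≤ botRow l ν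
  b_lt : botRow l ν < n
  top_mem : ν (topRow l ν) < l (topRow l ν)
  bot_mem : ν (botRow l ν) < l (botRow l ν)
  outside : ∀ i, i < topRow l ν ∨ botRow l ν < i → ν i = l i
  inside : ∀ i, topRow l ν ≤ i → i < botRow l ν → ν i + 1 = l (i + 1)
  key : ν (botRow l ν) + k = l (topRow l ν) + (botRow l ν - topRow l ν)

theorem hookFacts {n k : ℕ} {l ν : ℕ → ℕ} (hk : 1 ≤ k)
    (h : IsRimHookRemoval n l ν k) : HookFacts n k l ν := by
  obtain ⟨⟨hla, hl0, -⟩, ⟨hna, -, -⟩, hle, hsum, hconn, hstrip⟩ := h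
  set S : Set ℕ := {i | ν i < l i} with hS
  have hne : S.Nonempty := by
    by_contra hemp
    rw [Set.not_nonempty_iff_eq_empty] at hemp
    have : ∀ i, l i - ν i = 0 := by
      intro i
      have : i ∉ S := by simp [hemp]
      simp only [hS, Set.mem_setOf_eq, not_lt] at this
      omega
    rw [Finset.sum_congr rfl (fun i _ => this i), Finset.sum_const_zero] at hsum
    omega
  have hsub : ∀ i ∈ S, i < n := by
    intro i hi
    by_contra hni
    have := hl0 i (by omega)
    have : ν i < l i := hi
    omega
  have hbdd : BddAbove S := ⟨n, fun i hi => le_of_lt (hsub i hi)⟩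
  have ha_mem : topRow l ν ∈ S := Nat.sInf_mem hne
  have hb_mem : botRow l ν ∈ S := Nat.sSup_mem hne hbdd
  set a := topRow l ν
  set b := botRow l ν
  have hab : a ≤ b := Nat.sInf_le hb_mem
  have hbn : b < n := hsub b hb_mem
  have houts : ∀ i, i < a ∨ b < i → ν i = l i := by
    intro i hi
    have : i ∉ S := by
      rcases hi with hi | hi
      · exact Nat.notMem_of_lt_sInf hi
      · intro hmem
        have hle' : i ≤ b := le_csSup hbdd hmem
        omega
    simp only [hS, Set.mem_setOf_eq, not_lt] at this
    have := hle i
    omega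
  have hmemIcc : ∀ i, a ≤ i → i ≤ b → ν i < l i :=
    fun i h1 h2 => hconn a b i h1 h2 ha_mem hb_mem
  have hins : ∀ i, a ≤ i → i < b → ν i + 1 = l (i + 1) := by
    intro i h1 h2
    exact hstrip i (hmemIcc i h1 (by omega)) (hmemIcc (i+1) (by omega) (by omega))
  have hclaim : ∀ m, a ≤ m → m ≤ b →
      ∑ i ∈ Finset.Icc a m, (l i - ν i) = (l a - ν m) + (m - a) := by
    intro m hm
    induction m, hm using Nat.le_induction with
    | base => intro _; simp
    | succ m hm ih =>
      intro hmb
      have hstep : ν m + 1 = l (m + 1) := hins m hm (by omega)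
      have h1 : l (m + 1) ≤ l a := hla (by omega)
      have h2 : ν (m + 1) < l (m + 1) := hmemIcc (m+1) (by omega) hmb
      rw [Finset.sum_Icc_succ_top (by omega), ih (by omega)]
      have h3 : ν m < l a := by omega
      omega
  have hsum2 : ∑ i ∈ Finset.Icc a b, (l i - ν i) = k := by
    rw [← hsum]
    apply Finset.sum_subset
    · intro i hi
      simp only [Finset.mem_Icc] at hi
      simp only [Finset.mem_range]
      omega
    · intro i _ hni
      simp only [Finset.mem_Icc, not_and_or, not_le] at hni
      have := houts i (by omega)
      omega
  have hkey : (l a - ν b) + (b - a) = k := by rw [← hclaim b hab le_rfl]; exact hsum2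
  have hba : ν b < l a := lt_of_lt_of_le hb_mem (hla hab)
  have hkey2 : ν b + k = l a + (b - a) := by omega
  exact ⟨hla, hna, hab, hbn, ha_mem, hb_mem, houts, hins, hkey2⟩

theorem eq_of_ab {n k : ℕ} {l ν ν' : ℕ → ℕ}
    (F : HookFacts n k l ν) (F' : HookFacts n k l ν')
    (ha : topRow l ν = topRow l ν') (hb : botRow l ν = botRow l ν') : ν = ν' := by
  have hcb : ν (botRow l ν) = ν' (botRow l ν') := by
    have k1 := F.key
    have k2 := F'.key
    rw [← hb]
    rw [← ha, ← hb] at k2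
    omega
  funext i
  rcases lt_or_ge i (topRow l ν) with hi | hi
  · rw [F.outside i (Or.inl hi), F'.outside i (Or.inl (ha ▸ hi))]
  rcases lt_or_ge (botRow l ν) i with hi2 | hi2
  · rw [F.outside i (Or.inr hi2), F'.outside i (Or.inr (hb ▸ hi2))]
  rcases eq_or_lt_of_le hi2 with hieq | hilt
  · rw [hieq, hcb, ← hb]
  · have e1 := F.inside i hi hilt
    have e2 := F'.inside i (ha ▸ hi) (hb ▸ hilt)
    omega

theorem not_bot_lt_of_top_eq {n k : ℕ} {l ν ν' : ℕ → ℕ}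
    (F : HookFacts n k l ν) (F' : HookFacts n k l ν')
    (ha : topRow l ν = topRow l ν') : ¬ botRow l ν < botRow l ν' := by
  intro hbb
  set a := topRow l ν
  set b := botRow l ν
  set b' := botRow l ν'
  have hab : a ≤ b := F.a_le_b
  have hab' : topRow l ν' ≤ b := by rw [← ha]; exact hab
  have e1 : ν' b + 1 = l (b + 1) := F'.inside b hab' hbb
  have e2 : ν (b + 1) = l (b + 1) := F.outside (b+1) (Or.inr (by omega))
  have e3 : ν (b + 1) ≤ ν b := F.mono_nu (by omega)
  have e4 : ν' b' ≤ ν' b := F'.mono_nu (le_of_lt hbb)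
  have k1 : ν b + k = l a + (b - a) := F.key
  have k2 : ν' b' + k = l (topRow l ν') + (b' - topRow l ν') := F'.key
  rw [← ha] at k2
  omega

theorem eq_of_top {n k : ℕ} {l ν ν' : ℕ → ℕ}
    (F : HookFacts n k l ν) (F' : HookFacts n k l ν')
    (ha : topRow l ν = topRow l ν') : ν = ν' := by
  have h1 := not_bot_lt_of_top_eq F F' ha
  have h2 := not_bot_lt_of_top_eq F' F ha.symm
  exact eq_of_ab F F' ha (by omega)

theorem not_bot_lt_of_col_eq {n k : ℕ} {l ν ν' : ℕ → ℕ}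
    (F : HookFacts n k l ν) (F' : HookFacts n k l ν')
    (hc : ν (botRow l ν) = ν' (botRow l ν')) : ¬ botRow l ν < botRow l ν' := by
  intro hbb
  set b := botRow l ν
  set b' := botRow l ν'
  have e1 : ν' b' < l b' := F'.bot_mem
  have e2 : l b' ≤ l (b + 1) := F.mono_l (by omega)
  have e3 : ν (b + 1) = l (b + 1) := F.outside (b+1) (Or.inr (by omega))
  have e4 : ν (b + 1) ≤ ν b := F.mono_nu (by omega)
  omega

theorem eq_of_col {n k : ℕ} {l ν ν' : ℕ → ℕ}
    (F : HookFacts n k l ν) (F' : HookFacts n k l ν')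
    (hc : ν (botRow l ν) = ν' (botRow l ν')) : ν = ν' := by
  have h1 := not_bot_lt_of_col_eq F F' hc
  have h2 := not_bot_lt_of_col_eq F' F hc.symm
  have hb : botRow l ν = botRow l ν' := by omega
  -- now derive topRow equality
  have k1 := F.key
  have k2 := F'.key
  rw [← hc] at k2
  rw [← hb] at k2
  have hna : ¬ topRow l ν < topRow l ν' := by
    intro haa
    have h3 : l (topRow l ν') ≤ l (topRow l ν) := F.mono_l (le_of_lt haa)
    have h4 : topRow l ν' ≤ botRow l ν := by rw [hb]; exact F'.a_le_b
    omega
  have hna' : ¬ topRow l ν' < topRow l ν := by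
    intro haa
    have h3 : l (topRow l ν) ≤ l (topRow l ν') := F'.mono_l (le_of_lt haa)
    have h4 : topRow l ν ≤ botRow l ν := F.a_le_b
    omega
  exact eq_of_ab F F' (by omega) hb

theorem col_lt_of_top_ge {n k : ℕ} {l ν : ℕ → ℕ}
    (F : HookFacts n k l ν) (hs : sqSide n l ≤ topRow l ν) :
    ν (botRow l ν) < sqSide n l := by
  by_contra hc
  push_neg at hc
  set s := sqSide n l
  set a := topRow l ν
  set b := botRow l ν
  have h1 : ν b < l b := F.bot_mem
  have h2 : l b ≤ l a := F.mono_l F.a_le_b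
  have h3 : l a ≤ l s := F.mono_l hs
  have h4 : s + 1 ≤ n := by
    have := F.b_lt
    have := F.a_le_b
    omega
  have h5 : s + 1 ≤ s := by
    apply Nat.le_findGreatest h4
    refine ⟨by omega, ?_⟩
    simp only [Nat.add_sub_cancel]
    omega
  omega

end Stmt4Aux

open Stmt4Aux in
/-- for any `k ≥ 1`, the number of rim hooks of length `k` that can be
removed from a partition `λ` of `n` is at most `2 · sq(λ)`. -/
theorem stmt4 (n k : ℕ) (hk : 1 ≤ k) (l : ℕ → ℕ) (h : IsPartitionFun n l) :
    {ν : ℕ → ℕ | IsRimHookRemoval n l ν k}.ncard ≤ 2 * sqSide n l := by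
  classical
  set s := sqSide n l with hs
  set S : Set (ℕ → ℕ) := {ν : ℕ → ℕ | IsRimHookRemoval n l ν k} with hSdef
  set f : (ℕ → ℕ) → ℕ := fun ν =>
    if topRow l ν < s then topRow l ν else s + ν (botRow l ν) with hf
  have hF : ∀ ν ∈ S, HookFacts n k l ν := fun ν hν => hookFacts hk hν
  have hinj : Set.InjOn f S := by
    intro ν hν ν' hν' hfe
    have F := hF ν hν
    have F' := hF ν' hν'
    simp only [hf] at hfe
    split_ifs at hfe with h1 h2 h2
    · exact eq_of_top F F' hfe
    · have := col_lt_of_top_ge F' (by omega)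
      omega
    · have := col_lt_of_top_ge F (by omega)
      omega
    · exact eq_of_col F F' (by omega)
  have hsub : f '' S ⊆ ↑(Finset.range (2 * s)) := by
    rintro x ⟨ν, hν, rfl⟩
    have F := hF ν hν
    simp only [Finset.coe_range, Set.mem_Iio, hf]
    split_ifs with h1
    · have : 0 < s := by omega
      omega
    · have := col_lt_of_top_ge F (by omega)
      omega
  calc S.ncard = (f '' S).ncard := (Set.ncard_image_of_injOn hinj).symm
    _ ≤ (↑(Finset.range (2 * s)) : Set ℕ).ncard :=
        Set.ncard_le_ncard hsub (Finset.finite_toSet _)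
    _ = 2 * s := by rw [Set.ncard_coe_finset, Finset.card_range]
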